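/- Let $\Omega \subseteq \mathbb{R}^n$ and define $w_0^{(1)}(x)=1$, $w_0^{(i)}(x)=e^{x_{i-1}}$ for $2\le i\le n+1$, and $w_0^{(n+2)}(x)=e^{-x_1}$. Then the determinant of the $(n+2)\times(n+2)$ matrix $W(x)$ with rows $(w_0^{(i)}, \partial_{x_1}w_0^{(i)},\dots,\partial_{x_n}w_0^{(i)}, \Delta w_0^{(i)})$ equals $2\prod_{j=2}^{n} e^{x_j}$, which is bounded below by a positive constant on any bounded domain $\Omega$. -/

import Mathlib

open MeasureTheory Real Filter

/-- Partial derivative `∂f/∂x_j` of a real-valued function on `ℝⁿ`. -/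
noncomputable def pd {n : ℕ} (j : Fin n) (f : EuclideanSpace ℝ (Fin n) → ℝ)
    (x : EuclideanSpace ℝ (Fin n)) : ℝ :=
  fderiv ℝ f x (EuclideanSpace.single j 1)

/-- Euclidean Laplacian `Δf = ∑ⱼ ∂²f/∂x_j²`. -/
noncomputable def lapl {n : ℕ} (f : EuclideanSpace ℝ (Fin n) → ℝ)
    (x : EuclideanSpace ℝ (Fin n)) : ℝ :=
  ∑ j, pd j (fun y => pd j f y) x

/-- The `(n+2) × (n+2)` matrix whose `i`-th row is
`(w_i(x), ∂₁ w_i(x), …, ∂ₙ w_i(x), Δ w_i(x))`. -/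
noncomputable def Wmat {n : ℕ} (w : Fin (n + 2) → EuclideanSpace ℝ (Fin n) → ℝ)
    (x : EuclideanSpace ℝ (Fin n)) : Matrix (Fin (n + 2)) (Fin (n + 2)) ℝ :=
  fun i j =>
    if hj : (j : ℕ) = 0 then w i x
    else if hj' : (j : ℕ) ≤ n then pd ⟨(j : ℕ) - 1, by omega⟩ (w i) x
    else lapl (w i) x

lemma pd_const {n : ℕ} (c : ℝ) (j : Fin n) (x : EuclideanSpace ℝ (Fin n)) :
    pd j (fun _ => c) x = 0 := by
  simp [pd]

lemma lapl_const {n : ℕ} (c : ℝ) (x : EuclideanSpace ℝ (Fin n)) :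
    lapl (fun _ => c) x = 0 := by
  have h : ∀ j : Fin n, (fun y => pd j (fun _ => c) y) = (fun _ : EuclideanSpace ℝ (Fin n) => (0:ℝ)) := by
    intro j; funext y; exact pd_const c j y
  simp only [lapl, h, pd_const, Finset.sum_const_zero]

lemma pd_aexp {n : ℕ} (a c : ℝ) (k j : Fin n) (x : EuclideanSpace ℝ (Fin n)) :
    pd j (fun y => a * Real.exp (c * y k)) x
      = if j = k then a * c * Real.exp (c * x k) else 0 := by
  have h1 : HasFDerivAt (fun y : EuclideanSpace ℝ (Fin n) => c * y k)
      (c • (EuclideanSpace.proj (𝕜 := ℝ) k)) x :=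
    (EuclideanSpace.proj (𝕜 := ℝ) k).hasFDerivAt.const_mul c
  have h2 := (h1.exp).const_mul a
  rw [pd, h2.fderiv]
  simp only [ContinuousLinearMap.coe_smul', Pi.smul_apply, PiLp.proj_apply,
    EuclideanSpace.single_apply, smul_eq_mul]
  rcases eq_or_ne j k with rfl | hjk
  · simp [mul_comm, mul_assoc, mul_left_comm]
  · simp [Ne.symm hjk, hjk]

lemma lapl_aexp {n : ℕ} (a c : ℝ) (k : Fin n) (x : EuclideanSpace ℝ (Fin n)) :
    lapl (fun y => a * Real.exp (c * y k)) x = a * (c * c) * Real.exp (c * x k) := by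
  have key : ∀ j : Fin n, pd j (fun y => pd j (fun z => a * Real.exp (c * z k)) y) x
      = if j = k then a * (c * c) * Real.exp (c * x k) else 0 := by
    intro j
    rcases eq_or_ne j k with rfl | hjk
    · have h : (fun y => pd j (fun z => a * Real.exp (c * z j)) y)
          = (fun y : EuclideanSpace ℝ (Fin n) => (a * c) * Real.exp (c * y j)) := by
        funext y; rw [pd_aexp]; simp
      rw [h, pd_aexp]; simp; ring
    · have h : (fun y => pd j (fun z => a * Real.exp (c * z k)) y)
          = (fun _ : EuclideanSpace ℝ (Fin n) => (0:ℝ)) := by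
        funext y; rw [pd_aexp]; simp [hjk]
      rw [h, pd_const]; simp [hjk]
  simp only [lapl, key, Finset.sum_ite_eq', Finset.mem_univ, if_pos]

lemma abs_apply_le_norm {n : ℕ} (x : EuclideanSpace ℝ (Fin n)) (j : Fin n) :
    |x j| ≤ ‖x‖ := by
  rw [EuclideanSpace.norm_eq]
  have h1 : |x j| = Real.sqrt (‖x j‖ ^ 2) := by
    rw [Real.sqrt_sq_eq_abs, Real.norm_eq_abs, abs_abs]
  rw [h1]
  apply Real.sqrt_le_sqrt
  exact Finset.single_le_sum (f := fun i => ‖x i‖ ^ 2) (fun i _ => by positivity) (Finset.mem_univ j)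

lemma Wmat_entry (n : ℕ) (hn : 1 ≤ n)
    (w : Fin (n + 2) → EuclideanSpace ℝ (Fin n) → ℝ)
    (hw1 : ∀ x, w 0 x = 1)
    (hwi : ∀ i : Fin (n + 2), ∀ _h1 : 1 ≤ (i : ℕ), ∀ _h2 : (i : ℕ) ≤ n, ∀ x,
      w i x = Real.exp (x ⟨(i : ℕ) - 1, by have _h := hw1; omega⟩))
    (hwl : ∀ x, w (Fin.last (n + 1)) x = Real.exp (-(x ⟨0, hn⟩)))
    (x : EuclideanSpace ℝ (Fin n)) (i j : Fin (n + 2)) :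
    Wmat w x i j =
      if h0 : (i : ℕ) = 0 then (if (j : ℕ) = 0 then 1 else 0)
      else if hi : (i : ℕ) ≤ n then
        (if (j : ℕ) = 0 ∨ (j : ℕ) = (i : ℕ) ∨ (j : ℕ) = n + 1
          then Real.exp (x ⟨(i : ℕ) - 1, by omega⟩) else 0)
      else
        (if (j : ℕ) = 0 then Real.exp ((-1) * x ⟨0, hn⟩)
         else if (j : ℕ) = 1 then -Real.exp ((-1) * x ⟨0, hn⟩)
         else if (j : ℕ) = n + 1 then Real.exp ((-1) * x ⟨0, hn⟩) else 0) := by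
  have hjlt := j.isLt
  by_cases h0 : (i : ℕ) = 0
  · have hi0 : i = 0 := Fin.ext (by simpa using h0)
    have hwf : w i = fun _ => (1 : ℝ) := by subst hi0; funext y; exact hw1 y
    rw [dif_pos h0]
    simp only [Wmat, hwf, pd_const, lapl_const]
    split_ifs with h1 h2 <;> first | rfl | omega
  · by_cases hi : (i : ℕ) ≤ n
    · have h1 : 1 ≤ (i : ℕ) := by omega
      have hwf : w i = fun y => 1 * Real.exp (1 * y ⟨(i : ℕ) - 1, by omega⟩) := by
        funext y; rw [hwi i h1 hi y]; rw [one_mul, one_mul]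
      rw [dif_neg h0, dif_pos hi]
      by_cases hj0 : (j : ℕ) = 0
      · simp only [Wmat, hwf]; rw [dif_pos hj0, if_pos (Or.inl hj0)]; ring
      · by_cases hjn : (j : ℕ) ≤ n
        · simp only [Wmat, hwf]; rw [dif_neg hj0, dif_pos hjn, pd_aexp]
          by_cases hje : (j : ℕ) = (i : ℕ)
          · have hfe : (⟨(j:ℕ)-1, by omega⟩ : Fin n) = ⟨(i:ℕ)-1, by omega⟩ := by
              apply Fin.ext; show (j:ℕ)-1 = (i:ℕ)-1; omega
            rw [if_pos hfe, if_pos (Or.inr (Or.inl hje))]; ring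
          · have hfe : (⟨(j:ℕ)-1, by omega⟩ : Fin n) ≠ ⟨(i:ℕ)-1, by omega⟩ := by
              intro hcon
              have := congrArg Fin.val hcon
              simp only at this; omega
            rw [if_neg hfe, if_neg (by rintro (h | h | h) <;> omega)]
        · have hjl : (j : ℕ) = n + 1 := by omega
          simp only [Wmat, hwf]
          rw [dif_neg hj0, dif_neg hjn, lapl_aexp, if_pos (Or.inr (Or.inr hjl))]; ring
    · have hL : i = Fin.last (n + 1) := by
        apply Fin.ext; have := i.isLt; simp only [Fin.val_last]; omega
      have hwf : w i = fun y => 1 * Real.exp ((-1) * y ⟨0, hn⟩) := by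
        subst hL; funext y; rw [hwl y]; ring_nf
      rw [dif_neg h0, dif_neg hi]
      by_cases hj0 : (j : ℕ) = 0
      · simp only [Wmat, hwf]; rw [dif_pos hj0, if_pos hj0]; ring
      · by_cases hjn : (j : ℕ) ≤ n
        · simp only [Wmat, hwf]; rw [dif_neg hj0, dif_pos hjn, pd_aexp]
          rw [if_neg hj0]
          by_cases hj1 : (j : ℕ) = 1
          · have hfe : (⟨(j:ℕ)-1, by omega⟩ : Fin n) = ⟨0, hn⟩ := by
              apply Fin.ext; show (j:ℕ)-1 = 0; omega
            rw [if_pos hfe, if_pos hj1]; ring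
          · have hfe : (⟨(j:ℕ)-1, by omega⟩ : Fin n) ≠ ⟨0, hn⟩ := by
              intro hcon
              have := congrArg Fin.val hcon
              simp only at this; omega
            rw [if_neg hfe, if_neg hj1, if_neg (by omega)]
        · have hjl : (j : ℕ) = n + 1 := by omega
          simp only [Wmat, hwf]
          rw [dif_neg hj0, dif_neg hjn, lapl_aexp, if_neg hj0, if_neg (by omega), if_pos hjl]
          ring

lemma det_formula (n : ℕ) (hn : 1 ≤ n) (x : EuclideanSpace ℝ (Fin n))
    (M : Matrix (Fin (n + 2)) (Fin (n + 2)) ℝ)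
    (hM : ∀ i j : Fin (n + 2), M i j =
      if h0 : (i : ℕ) = 0 then (if (j : ℕ) = 0 then 1 else 0)
      else if hi : (i : ℕ) ≤ n then
        (if (j : ℕ) = 0 ∨ (j : ℕ) = (i : ℕ) ∨ (j : ℕ) = n + 1
          then Real.exp (x ⟨(i : ℕ) - 1, by omega⟩) else 0)
      else
        (if (j : ℕ) = 0 then Real.exp ((-1) * x ⟨0, hn⟩)
         else if (j : ℕ) = 1 then -Real.exp ((-1) * x ⟨0, hn⟩)
         else if (j : ℕ) = n + 1 then Real.exp ((-1) * x ⟨0, hn⟩) else 0)) :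
    M.det = 2 * ∏ j : Fin n, if (j : ℕ) = 0 then 1 else Real.exp (x j) := by
  classical
  set z : Fin n := ⟨0, hn⟩ with hz
  set F : ℝ := Real.exp ((-1) * x z) with hF
  set o : Fin (n + 2) := 1 with hoo
  set L : Fin (n + 2) := Fin.last (n + 1) with hLL
  have ho : (o : ℕ) = 1 := Fin.val_one n
  have hL : (L : ℕ) = n + 1 := Fin.val_last (n + 1)
  have hzv : (z : ℕ) = 0 := rfl
  have hoL : o ≠ L := by intro h; have := congrArg Fin.val h; omega
  have hFz : Real.exp (x z) * F = 1 := by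
    rw [hF, ← Real.exp_add]; norm_num
  have hFne : F ≠ 0 := Real.exp_ne_zero _
  -- the common product
  set P : ℝ := ∏ j ∈ Finset.univ \ {z}, Real.exp (x j) with hP
  have hcongr : ∀ j : Fin n, j ∈ Finset.univ \ ({z} : Finset (Fin n)) → (j : ℕ) ≠ 0 := by
    intro j hj
    have hjz : j ≠ z := (Finset.mem_sdiff.mp hj).2 ∘ Finset.mem_singleton.mpr
    intro hc; exact hjz (Fin.ext (by rw [hc, hzv]))
  have hRHS : (∏ j : Fin n, if (j : ℕ) = 0 then 1 else Real.exp (x j)) = P := by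
    rw [Finset.prod_eq_mul_prod_sdiff_singleton_of_mem (Finset.mem_univ z)
      (fun j => if (j : ℕ) = 0 then 1 else Real.exp (x j)), if_pos hzv, one_mul]
    exact Finset.prod_congr rfl fun j hj => if_neg (hcongr j hj)
  have hprodsplit : (∏ i : Fin n, Real.exp (x i)) = Real.exp (x z) * P :=
    Finset.prod_eq_mul_prod_sdiff_singleton_of_mem (Finset.mem_univ z) _
  have hprodsplit2 : (∏ i : Fin n, if (i : ℕ) = 0 then -F else Real.exp (x i)) = -F * P := by
    rw [Finset.prod_eq_mul_prod_sdiff_singleton_of_mem (Finset.mem_univ z)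
      (fun i => if (i : ℕ) = 0 then -F else Real.exp (x i)), if_pos hzv]
    congr 1
    exact Finset.prod_congr rfl fun j hj => if_neg (hcongr j hj)
  -- needed entries
  have hM00 : M 0 0 = 1 := by rw [hM]; norm_num
  have hMmid : ∀ i : Fin n, M i.castSucc.succ i.castSucc.succ = Real.exp (x i) := by
    intro i
    rw [hM]
    have hv : (i.castSucc.succ : ℕ) = (i : ℕ) + 1 := by
      rw [Fin.val_succ, Fin.coe_castSucc]
    rw [dif_neg (by omega), dif_pos (by have := i.isLt; omega),
      if_pos (Or.inr (Or.inl rfl))]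
    congr 1
  have hMLL : M ((Fin.last n).succ) ((Fin.last n).succ) = F := by
    have hv : ((Fin.last n).succ : ℕ) = n + 1 := by rw [Fin.val_succ, Fin.val_last]
    rw [hM, dif_neg (by omega), dif_neg (by omega), if_neg (by omega),
      if_neg (by omega), if_pos hv]
  have hMLo : M L o = -F := by
    rw [hM, dif_neg (by omega), dif_neg (by omega), if_neg (by omega), if_pos ho]
  have hMoL : M o ((Fin.last n).succ) = Real.exp (x z) := by
    have hv : ((Fin.last n).succ : ℕ) = n + 1 := by rw [Fin.val_succ, Fin.val_last]
    rw [hM, dif_neg (by omega), dif_pos (by omega), if_pos (Or.inr (Or.inr hv))]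
    congr 1
  -- swap values on indices
  have hsw0 : Equiv.swap o L 0 = 0 := by
    apply Equiv.swap_apply_of_ne_of_ne
    · intro h; have := congrArg Fin.val h; rw [Fin.val_zero] at this; omega
    · intro h; have := congrArg Fin.val h; rw [Fin.val_zero] at this; omega
  -- identity term
  have hT1 : (∏ i : Fin (n + 2), M i i) = P := by
    rw [Fin.prod_univ_succ, Fin.prod_univ_castSucc]
    rw [hM00, hMLL, one_mul]
    have : (∏ i : Fin n, M i.castSucc.succ i.castSucc.succ) = Real.exp (x z) * P := by
      rw [Finset.prod_congr rfl fun i _ => hMmid i]; exact hprodsplit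
    rw [this, mul_right_comm, hFz, one_mul]
  -- swap term
  have hT2 : (∏ i : Fin (n + 2), M (Equiv.swap o L i) i) = -P := by
    rw [Fin.prod_univ_succ, Fin.prod_univ_castSucc]
    have h0 : M (Equiv.swap o L 0) 0 = 1 := by rw [hsw0, hM00]
    have hlast : M (Equiv.swap o L ((Fin.last n).succ)) ((Fin.last n).succ)
        = Real.exp (x z) := by
      have : (Fin.last n).succ = L := by
        apply Fin.ext; rw [Fin.val_succ, Fin.val_last, hL]
      rw [this, Equiv.swap_apply_right, ← this, hMoL]
    have hmid : (∏ i : Fin n, M (Equiv.swap o L i.castSucc.succ) i.castSucc.succ)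
        = -F * P := by
      rw [← hprodsplit2]
      apply Finset.prod_congr rfl
      intro i _
      have hv : (i.castSucc.succ : ℕ) = (i : ℕ) + 1 := by
        rw [Fin.val_succ, Fin.coe_castSucc]
      by_cases hi0 : (i : ℕ) = 0
      · have : i.castSucc.succ = o := by apply Fin.ext; omega
        rw [this, Equiv.swap_apply_left, hMLo, if_pos hi0]
      · have h1 : i.castSucc.succ ≠ o := by
          intro h; have := congrArg Fin.val h; omega
        have h2 : i.castSucc.succ ≠ L := by
          intro h; have := congrArg Fin.val h
          rw [hv, hL] at this; have := i.isLt; omega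
        rw [Equiv.swap_apply_of_ne_of_ne h1 h2, hMmid, if_neg hi0]
    rw [h0, hlast, hmid, one_mul, mul_right_comm]
    have hh : -F * Real.exp (x z) = -1 := by rw [neg_mul, mul_comm F, hFz]
    rw [hh, neg_one_mul]
  -- kill other permutations
  have hkill : ∀ σ ∈ (Finset.univ : Finset (Equiv.Perm (Fin (n + 2)))),
      σ ≠ 1 ∧ σ ≠ Equiv.swap o L →
      (Equiv.Perm.sign σ : ℤˣ) • (∏ i : Fin (n + 2), M (σ i) i) = 0 := by
    intro σ _ hσ
    obtain ⟨hσ1, hσ2⟩ := hσ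
    suffices h : (∏ i : Fin (n + 2), M (σ i) i) = 0 by rw [h, smul_zero]
    by_contra hp
    have hnz : ∀ j : Fin (n + 2), M (σ j) j ≠ 0 := fun j =>
      Finset.prod_ne_zero_iff.mp hp j (Finset.mem_univ j)
    have F1 : ∀ j : Fin (n + 2), 2 ≤ (j : ℕ) → (j : ℕ) ≤ n → σ j = j := by
      intro j h2 h3
      have hj := hnz j
      rw [hM] at hj
      by_cases c0 : ((σ j : Fin (n + 2)) : ℕ) = 0
      · rw [dif_pos c0, if_neg (by omega)] at hj; exact absurd rfl hj
      · by_cases cn : ((σ j) : ℕ) ≤ n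
        · rw [dif_neg c0, dif_pos cn] at hj
          by_cases cd : ((j : ℕ) = 0 ∨ (j : ℕ) = ((σ j) : ℕ) ∨ (j : ℕ) = n + 1)
          · apply Fin.ext
            rcases cd with h | h | h <;> omega
          · rw [if_neg cd] at hj; exact absurd rfl hj
        · rw [dif_neg c0, dif_neg cn, if_neg (by omega), if_neg (by omega),
            if_neg (by omega)] at hj
          exact absurd rfl hj
    have F2 : ((σ o) : ℕ) = 1 ∨ σ o = L := by
      have hj := hnz o
      rw [hM] at hj
      by_cases c0 : ((σ o) : ℕ) = 0
      · rw [dif_pos c0, if_neg (by omega)] at hj; exact absurd rfl hj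
      · by_cases cn : ((σ o) : ℕ) ≤ n
        · rw [dif_neg c0, dif_pos cn] at hj
          by_cases cd : ((o : ℕ) = 0 ∨ (o : ℕ) = ((σ o) : ℕ) ∨ (o : ℕ) = n + 1)
          · left; rcases cd with h | h | h <;> omega
          · rw [if_neg cd] at hj; exact absurd rfl hj
        · right; apply Fin.ext; have := (σ o).isLt; rw [hL]; omega
    have F3 : ((σ L) : ℕ) ≠ 0 := by
      intro c0
      have hj := hnz L
      rw [hM, dif_pos c0, if_neg (by omega)] at hj
      exact absurd rfl hj
    have key : ∀ m : Fin (n + 2), 2 ≤ ((σ m) : ℕ) → ((σ m) : ℕ) ≤ n → σ m = m :=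
      fun m h2 h3 => σ.injective (F1 (σ m) h2 h3)
    rcases F2 with hA | hB
    · -- σ o = o, show σ = 1
      have hoo2 : σ o = o := Fin.ext (by omega)
      have hLL2 : σ L = L := by
        by_cases c0 : ((σ L) : ℕ) = 0
        · exact absurd c0 F3
        by_cases c1 : ((σ L) : ℕ) = 1
        · exfalso
          have h' : σ L = σ o := Fin.ext (by omega)
          have := congrArg Fin.val (σ.injective h')
          rw [hL, ho] at this; omega
        by_cases cn : ((σ L) : ℕ) ≤ n
        · exfalso
          have := congrArg Fin.val (key L (by omega) cn)
          rw [hL] at this; omega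
        · apply Fin.ext; have := (σ L).isLt; rw [hL]; omega
      have h02 : σ 0 = 0 := by
        by_cases c0 : ((σ 0 : Fin (n + 2)) : ℕ) = 0
        · exact Fin.ext (by rw [Fin.val_zero]; exact c0)
        by_cases c1 : ((σ 0 : Fin (n + 2)) : ℕ) = 1
        · exfalso
          have h' : σ 0 = σ o := Fin.ext (by omega)
          have := congrArg Fin.val (σ.injective h')
          rw [Fin.val_zero, ho] at this; omega
        by_cases cn : ((σ 0 : Fin (n + 2)) : ℕ) ≤ n
        · exfalso
          have := congrArg Fin.val (key 0 (by omega) cn)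
          rw [Fin.val_zero] at this; omega
        · exfalso
          have h' : σ 0 = σ L := by
            rw [hLL2]; apply Fin.ext
            have := (σ 0 : Fin (n + 2)).isLt; rw [hL]; omega
          have := congrArg Fin.val (σ.injective h')
          rw [Fin.val_zero, hL] at this; omega
      apply hσ1
      apply Equiv.ext
      intro j
      rw [Equiv.Perm.one_apply]
      by_cases d0 : (j : ℕ) = 0
      · have : j = 0 := Fin.ext (by rw [Fin.val_zero]; exact d0)
        rw [this, h02]
      · by_cases d1 : (j : ℕ) = 1
        · have : j = o := Fin.ext (by rw [ho]; exact d1)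
          rw [this, hoo2]
        · by_cases dn : (j : ℕ) ≤ n
          · exact F1 j (by omega) dn
          · have : j = L := Fin.ext (by rw [hL]; have := j.isLt; omega)
            rw [this, hLL2]
    · -- σ o = L, show σ = swap o L
      have hLo : σ L = o := by
        by_cases c0 : ((σ L) : ℕ) = 0
        · exact absurd c0 F3
        by_cases c1 : ((σ L) : ℕ) = 1
        · exact Fin.ext (by rw [ho]; exact c1)
        by_cases cn : ((σ L) : ℕ) ≤ n
        · exfalso
          have := congrArg Fin.val (key L (by omega) cn)
          rw [hL] at this; omega
        · exfalso
          have h' : σ L = σ o := by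
            rw [hB]; apply Fin.ext
            have := (σ L).isLt; rw [hL]; omega
          have := congrArg Fin.val (σ.injective h')
          rw [hL, ho] at this; omega
      have h02 : σ 0 = 0 := by
        by_cases c0 : ((σ 0 : Fin (n + 2)) : ℕ) = 0
        · exact Fin.ext (by rw [Fin.val_zero]; exact c0)
        by_cases c1 : ((σ 0 : Fin (n + 2)) : ℕ) = 1
        · exfalso
          have h' : σ 0 = σ L := by
            rw [hLo]; apply Fin.ext; rw [ho]; exact c1
          have := congrArg Fin.val (σ.injective h')
          rw [Fin.val_zero, hL] at this; omega
        by_cases cn : ((σ 0 : Fin (n + 2)) : ℕ) ≤ n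
        · exfalso
          have := congrArg Fin.val (key 0 (by omega) cn)
          rw [Fin.val_zero] at this; omega
        · exfalso
          have h' : σ 0 = σ o := by
            rw [hB]; apply Fin.ext
            have := (σ 0 : Fin (n + 2)).isLt; rw [hL]; omega
          have := congrArg Fin.val (σ.injective h')
          rw [Fin.val_zero, ho] at this; omega
      apply hσ2
      apply Equiv.ext
      intro j
      by_cases d0 : (j : ℕ) = 0
      · have hj0 : j = 0 := Fin.ext (by rw [Fin.val_zero]; exact d0)
        rw [hj0, h02, hsw0]
      · by_cases d1 : (j : ℕ) = 1
        · have : j = o := Fin.ext (by rw [ho]; exact d1)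
          rw [this, hB, Equiv.swap_apply_left]
        · by_cases dn : (j : ℕ) ≤ n
          · have hne1 : j ≠ o := by intro h; have := congrArg Fin.val h; omega
            have hne2 : j ≠ L := by
              intro h; have := congrArg Fin.val h; rw [hL] at this; omega
            rw [Equiv.swap_apply_of_ne_of_ne hne1 hne2]
            exact F1 j (by omega) dn
          · have : j = L := Fin.ext (by rw [hL]; have := j.isLt; omega)
            rw [this, hLo, Equiv.swap_apply_right]
  have hne : (1 : Equiv.Perm (Fin (n + 2))) ≠ Equiv.swap o L := by
    intro h
    have h' : (1 : Equiv.Perm (Fin (n + 2))) o = Equiv.swap o L o := by rw [h]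
    rw [Equiv.Perm.one_apply, Equiv.swap_apply_left] at h'
    exact hoL h'
  rw [Matrix.det_apply]
  rw [Finset.sum_eq_add_of_mem 1 (Equiv.swap o L) (Finset.mem_univ _)
    (Finset.mem_univ _) hne (by
      intro c hc hcc
      exact hkill c hc ⟨hcc.1, hcc.2⟩)]
  have hs1 : (Equiv.Perm.sign (1 : Equiv.Perm (Fin (n + 2))) : ℤˣ) = 1 :=
    Equiv.Perm.sign_one
  have hs2 : (Equiv.Perm.sign (Equiv.swap o L) : ℤˣ) = -1 :=
    Equiv.Perm.sign_swap hoL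
  have e1 : (∏ i : Fin (n + 2), M ((1 : Equiv.Perm (Fin (n + 2))) i) i) = P := by
    rw [← hT1]; rfl
  rw [hs1, hs2, e1, hT2, one_smul, hRHS]
  have : (-1 : ℤˣ) • (-P : ℝ) = P := by
    rw [Units.smul_def]; norm_num
  rw [this]; ring

theorem stmt_1 (n : ℕ) (hn : 1 ≤ n) (Ω : Set (EuclideanSpace ℝ (Fin n)))
    (w : Fin (n + 2) → EuclideanSpace ℝ (Fin n) → ℝ)
    (hw1 : ∀ x, w 0 x = 1)
    (hwi : ∀ i : Fin (n + 2), ∀ _h1 : 1 ≤ (i : ℕ), ∀ _h2 : (i : ℕ) ≤ n, ∀ x,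
      w i x = Real.exp (x ⟨(i : ℕ) - 1, by omega⟩))
    (hwl : ∀ x, w (Fin.last (n + 1)) x = Real.exp (-(x ⟨0, hn⟩))) :
    (∀ x ∈ Ω, (Wmat w x).det
        = 2 * ∏ j : Fin n, if (j : ℕ) = 0 then 1 else Real.exp (x j)) ∧
    (Bornology.IsBounded Ω → ∃ r > 0, ∀ x ∈ Ω, r ≤ |(Wmat w x).det|) := by
  have hdet : ∀ x : EuclideanSpace ℝ (Fin n), (Wmat w x).det
      = 2 * ∏ j : Fin n, if (j : ℕ) = 0 then 1 else Real.exp (x j) :=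
    fun x => det_formula n hn x (Wmat w x) (Wmat_entry n hn w hw1 hwi hwl x)
  constructor
  · intro x _
    exact hdet x
  · intro hB
    obtain ⟨C, hC⟩ := hB.exists_norm_le
    set R : ℝ := max C 0 with hR
    have hR0 : 0 ≤ R := le_max_right C 0
    refine ⟨2 * Real.exp (-R) ^ n, by positivity, ?_⟩
    intro x hx
    rw [hdet x]
    have hle : 2 * Real.exp (-R) ^ n
        ≤ 2 * ∏ j : Fin n, if (j : ℕ) = 0 then 1 else Real.exp (x j) := by
      apply mul_le_mul_of_nonneg_left _ (by norm_num : (0:ℝ) ≤ 2)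
      have hpow : Real.exp (-R) ^ n = ∏ _j : Fin n, Real.exp (-R) := by
        rw [Finset.prod_const, Finset.card_univ, Fintype.card_fin]
      rw [hpow]
      apply Finset.prod_le_prod (fun j _ => (Real.exp_pos _).le)
      intro j _
      by_cases hj : (j : ℕ) = 0
      · rw [if_pos hj]
        exact Real.exp_le_one_iff.mpr (by linarith)
      · rw [if_neg hj]
        apply Real.exp_le_exp.mpr
        have h1 : |x j| ≤ ‖x‖ := abs_apply_le_norm x j
        have h2 : ‖x‖ ≤ C := hC x hx
        have h4 : -(x j) ≤ R := by
          calc -(x j) ≤ |x j| := neg_le_abs (x j)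
          _ ≤ ‖x‖ := h1
          _ ≤ C := h2
          _ ≤ R := le_max_left C 0
        linarith
    refine hle.trans (le_abs_self _)
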